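/- Let n ≥ 2, let 0 < ε, and let A ∈ ℝ^{n×(n+1)} be the matrix with columns indexed 0,1,…,n whose entries are A(i,0) = 1 and A(i,i) = ε for every row i ∈ {1,…,n}, all other entries being 0. Then for every i ∈ {1,…,n}, ‖A − π_{{i}}(A)‖_2² = ε²(n + ε²)/(1 + ε²). -/

import Mathlib

open Matrix BigOperators

noncomputable def projSpan {m n : ℕ} (A : Matrix (Fin m) (Fin n) ℝ) (S : Finset (Fin m)) :
    Matrix (Fin m) (Fin n) ℝ := fun i j =>
  (Submodule.orthogonalProjectionOnto
      (Submodule.span ℝ (Set.range (fun s : S => (WithLp.equiv 2 (Fin n → ℝ)).symm (A s))))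
      ((WithLp.equiv 2 (Fin n → ℝ)).symm (A i)) : EuclideanSpace ℝ (Fin n)) j

def rowSub {m n : ℕ} (A : Matrix (Fin m) (Fin n) ℝ) (S : Finset (Fin m)) :
    Matrix {x // x ∈ S} (Fin n) ℝ := fun i j => A i.1 j

noncomputable def gramDet {m n : ℕ} (A : Matrix (Fin m) (Fin n) ℝ) (S : Finset (Fin m)) : ℝ :=
  (rowSub A S * (rowSub A S)ᵀ).det

noncomputable def frobSq {m n : ℕ} (M : Matrix (Fin m) (Fin n) ℝ) : ℝ :=
  ∑ i, ∑ j, (M i j)^2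

noncomputable def specNorm {m n : ℕ} (M : Matrix (Fin m) (Fin n) ℝ) : ℝ :=
  ‖LinearMap.toContinuousLinearMap (Matrix.toEuclideanLin M)‖

lemma enorm_sq {m : ℕ} (w : EuclideanSpace ℝ (Fin m)) : ‖w‖^2 = ∑ k, (w k)^2 := by
  rw [EuclideanSpace.norm_eq, Real.sq_sqrt (by positivity)]
  simp [sq_abs]

lemma key_ineq (N : ℕ) (ε c s p q : ℝ) (hε : 0 < ε)
    (hc : c^2 * (1+ε^2) ≤ ε^2 * p) (hs : s^2 ≤ (N:ℝ) * q) :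
    ((N:ℝ) * c^2 + 2*ε*c*s + ε^2*q) * (1+ε^2) ≤ ((N:ℝ)*ε^2 + ε^2*(1+ε^2)) * (p+q) := by
  have hd : (0:ℝ) < 1+ε^2 := by positivity
  have h3 : 0 ≤ ((1+ε^2)*c - ε*s)^2 := sq_nonneg _
  have h1 : (N:ℝ)*(c^2*(1+ε^2)) ≤ (N:ℝ)*(ε^2*p) :=
    mul_le_mul_of_nonneg_left hc (Nat.cast_nonneg N)
  have h2 : ε^2*s^2 ≤ ε^2*((N:ℝ)*q) := mul_le_mul_of_nonneg_left hs (sq_nonneg ε)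
  have h4 : c^2*(1+ε^2)*(1+ε^2) ≤ ε^2*p*(1+ε^2) := mul_le_mul_of_nonneg_right hc hd.le
  nlinarith [h1, h2, h3, h4]

lemma proj_formula (n : ℕ) (ε : ℝ) (hε : 0 < ε)
    (A : Matrix (Fin n) (Fin (n + 1)) ℝ)
    (hA : ∀ i j, A i j = if (j : ℕ) = 0 then 1 else if (j : ℕ) = (i : ℕ) + 1 then ε else 0)
    (i : Fin n) :
    ∀ k j, projSpan A {i} k j = (if k = i then 1 else 1/(1+ε^2)) * A i j := by
  classical
  have hd : (0:ℝ) < 1+ε^2 := by positivity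
  set v : Fin n → EuclideanSpace ℝ (Fin (n+1)) := fun k => (WithLp.equiv 2 (Fin (n+1) → ℝ)).symm (A k) with hv
  have hrange : Set.range (fun s : ({i} : Finset (Fin n)) =>
      (WithLp.equiv 2 (Fin (n+1) → ℝ)).symm (A s)) = {v i} := by
    ext y
    constructor
    · rintro ⟨⟨s, hs⟩, rfl⟩
      simp only [Finset.mem_singleton] at hs
      subst hs; rfl
    · rintro rfl
      exact ⟨⟨i, Finset.mem_singleton_self i⟩, rfl⟩
  have hvapp : ∀ k j, v k j = A k j := fun k j => rfl
  have hinner : ∀ k, (inner ℝ (v i) (v k) : ℝ) = ∑ j, A i j * A k j := by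
    intro k
    simp [PiLp.inner_apply, RCLike.inner_apply, hvapp, mul_comm]
  have hAval : ∀ k (j : Fin n), A k j.succ = if j = k then ε else 0 := by
    intro k j
    rw [hA]
    simp [Fin.val_succ, Fin.val_inj]
  have hA0 : ∀ k, A k 0 = 1 := by intro k; rw [hA]; simp
  have hsum : ∀ k, ∑ j, A i j * A k j = if k = i then 1+ε^2 else 1 := by
    intro k
    rw [Fin.sum_univ_succ]
    simp only [hA0, hAval, one_mul]
    by_cases hk : k = i
    · subst hk
      simp [ite_mul, mul_ite, Finset.sum_ite_eq', sq]
    · simp [ite_mul, mul_ite, Finset.sum_ite_eq', hk, Ne.symm hk]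
  have hnorm : ‖v i‖^2 = 1+ε^2 := by
    rw [← real_inner_self_eq_norm_sq, hinner, hsum, if_pos rfl]
  intro k j
  have hproj : (Submodule.orthogonalProjectionOnto
      (Submodule.span ℝ (Set.range (fun s : ({i} : Finset (Fin n)) =>
        (WithLp.equiv 2 (Fin (n+1) → ℝ)).symm (A s)))) (v k) : EuclideanSpace ℝ (Fin (n+1)))
      = ((inner ℝ (v i) (v k) : ℝ)/(‖v i‖^2)) • v i := by
    rw [hrange]
    exact Submodule.starProjection_singleton ℝ (v k)
  show (Submodule.orthogonalProjectionOnto _ (v k) : EuclideanSpace ℝ (Fin (n+1))) j = _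
  rw [hproj]
  have : (((inner ℝ (v i) (v k) : ℝ)/(‖v i‖^2)) • v i) j
      = ((inner ℝ (v i) (v k) : ℝ)/(‖v i‖^2)) * A i j := rfl
  rw [this, hinner, hsum, hnorm]
  by_cases hk : k = i <;> simp [hk]
  field_simp

set_option maxHeartbeats 2000000 in
/-- For the n×(n+1) matrix A with A(i,0) = 1, A(i,i) = ε and zeros elsewhere,
‖A − π_{{i}}(A)‖₂² = ε²(n+ε²)/(1+ε²) for every row i. -/
theorem spectral_norm_after_projection (n : ℕ) (hn : 2 ≤ n) (ε : ℝ) (hε : 0 < ε)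
    (A : Matrix (Fin n) (Fin (n + 1)) ℝ)
    (hA : ∀ i j, A i j = if (j : ℕ) = 0 then 1 else if (j : ℕ) = (i : ℕ) + 1 then ε else 0)
    (i : Fin n) :
    (specNorm (A - projSpan A {i}))^2 = ε^2 * ((n : ℝ) + ε^2) / (1 + ε^2) := by
  classical
  have hd : (0:ℝ) < 1+ε^2 := by positivity
  set lam : ℝ := ε^2 * ((n : ℝ) + ε^2) / (1 + ε^2) with hlam
  have hn1 : (1:ℝ) ≤ (n:ℝ) := by exact_mod_cast Nat.one_le_of_lt hn
  have hlampos : 0 < lam := by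
    rw [hlam]
    have : (0:ℝ) < (n:ℝ) + ε^2 := by nlinarith
    positivity
  have hproj := proj_formula n ε hε A hA i
  have hAval : ∀ k (j : Fin n), A k j.succ = if j = k then ε else 0 := by
    intro k j
    rw [hA]
    simp [Fin.val_succ, Fin.val_inj]
  have hA0 : ∀ k, A k 0 = 1 := by intro k; rw [hA]; simp
  have rowdot : ∀ (k : Fin n) (x : Fin (n+1) → ℝ),
      ∑ j, A k j * x j = x 0 + ε * x k.succ := by
    intro k x
    rw [Fin.sum_univ_succ]
    simp [hA0, hAval, ite_mul, Finset.sum_ite_eq']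
  set a : ℝ := ε^2/(1+ε^2) with ha
  set b : ℝ := ε/(1+ε^2) with hb
  set M : Matrix (Fin n) (Fin (n+1)) ℝ := A - projSpan A {i} with hM
  set T := LinearMap.toContinuousLinearMap (Matrix.toEuclideanLin M) with hT
  have hTapp : ∀ (x : EuclideanSpace ℝ (Fin (n+1))) (k : Fin n),
      (T x) k = if k = i then 0 else (a * x 0 - b * x i.succ + ε * x k.succ) := by
    intro x k
    have h1 : (T x) k = ∑ j, M k j * x j := by
      simp [hT, Matrix.toEuclideanLin_apply, Matrix.mulVec, dotProduct]
    rw [h1]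
    have h2 : ∀ j, M k j * x j = A k j * x j - (if k = i then 1 else 1/(1+ε^2)) * (A i j * x j) := by
      intro j
      rw [hM]
      simp only [Matrix.sub_apply]
      rw [hproj k j]
      ring
    simp_rw [h2]
    rw [Finset.sum_sub_distrib, ← Finset.mul_sum, rowdot, rowdot]
    by_cases hk : k = i
    · subst hk; simp
    · rw [if_neg hk, if_neg hk, ha, hb]
      field_simp
      ring
  -- norm of T x
  have normTx : ∀ (x : EuclideanSpace ℝ (Fin (n+1))),
      ‖T x‖^2 = ∑ k ∈ Finset.univ.erase i, (a * x 0 - b * x i.succ + ε * x k.succ)^2 := by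
    intro x
    rw [enorm_sq]
    rw [← Finset.add_sum_erase _ _ (Finset.mem_univ i)]
    rw [hTapp x i, if_pos rfl]
    rw [Finset.sum_congr rfl (fun k hk => by
      rw [hTapp x k, if_neg (Finset.ne_of_mem_erase hk)])]
    ring
  have hcard : (Finset.univ.erase i).card = n - 1 := by
    rw [Finset.card_erase_of_mem (Finset.mem_univ i), Finset.card_univ, Fintype.card_fin]
  have hNcast : ((n-1 : ℕ) : ℝ) = (n:ℝ) - 1 := by
    have : 1 ≤ n := by omega
    push_cast [this]
    ring
  have expand : ∀ (c : ℝ) (y : Fin n → ℝ),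
      ∑ k ∈ Finset.univ.erase i, (c + ε * y k)^2
      = ((n:ℝ)-1) * c^2 + 2*ε*c*(∑ k ∈ Finset.univ.erase i, y k)
        + ε^2 * (∑ k ∈ Finset.univ.erase i, (y k)^2) := by
    intro c y
    have h : ∀ k, (c + ε*y k)^2 = c^2 + (2*ε*c)*(y k) + ε^2*(y k)^2 := fun k => by ring
    simp_rw [h]
    rw [Finset.sum_add_distrib, Finset.sum_add_distrib, ← Finset.mul_sum, ← Finset.mul_sum,
      Finset.sum_const, hcard, nsmul_eq_mul, hNcast]
  -- norm of x
  have normx : ∀ (x : EuclideanSpace ℝ (Fin (n+1))),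
      ‖x‖^2 = (x 0^2 + x i.succ^2) + ∑ k ∈ Finset.univ.erase i, (x k.succ)^2 := by
    intro x
    rw [enorm_sq, Fin.sum_univ_succ,
      ← Finset.add_sum_erase _ (fun k : Fin n => (x k.succ)^2) (Finset.mem_univ i)]
    ring
  -- upper bound
  have upper : ∀ (x : EuclideanSpace ℝ (Fin (n+1))), ‖T x‖^2 ≤ lam * ‖x‖^2 := by
    intro x
    set c : ℝ := a * x 0 - b * x i.succ with hc
    set s : ℝ := ∑ k ∈ Finset.univ.erase i, x k.succ with hs
    set q : ℝ := ∑ k ∈ Finset.univ.erase i, (x k.succ)^2 with hq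
    set p : ℝ := x 0^2 + x i.succ^2 with hp
    have h1 : ‖T x‖^2 = ((n:ℝ)-1) * c^2 + 2*ε*c*s + ε^2*q := by
      rw [normTx x]
      have : ∀ k : Fin n, (a * x 0 - b * x i.succ + ε * x k.succ)^2 = (c + ε * (x k.succ))^2 := by
        intro k; rw [hc]
      simp_rw [this]
      exact expand c (fun k => x k.succ)
    have hcs : c^2 * (1+ε^2) ≤ ε^2 * p := by
      have key2 : (ε * x 0 - x i.succ)^2 ≤ (x 0^2 + x i.succ^2) * (1+ε^2) := by
        nlinarith [sq_nonneg (x 0 + ε * x i.succ)]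
      have e : c * (1+ε^2) = ε * (ε * x 0 - x i.succ) := by
        rw [hc, ha, hb]; field_simp
      have e2 : (c*(1+ε^2))^2 = ε^2 * (ε*x 0 - x i.succ)^2 := by rw [e]; ring
      rw [← mul_le_mul_iff_left₀ hd]
      calc c^2*(1+ε^2)*(1+ε^2) = (c*(1+ε^2))^2 := by ring
        _ = ε^2*(ε*x 0 - x i.succ)^2 := e2
        _ ≤ ε^2*((x 0^2 + x i.succ^2)*(1+ε^2)) := mul_le_mul_of_nonneg_left key2 (sq_nonneg ε)
        _ = ε^2*p*(1+ε^2) := by rw [hp]; ring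
    have hss : s^2 ≤ ((n-1:ℕ):ℝ) * q := by
      rw [hs, hq]
      have := sq_sum_le_card_mul_sum_sq (s := Finset.univ.erase i)
        (f := fun k : Fin n => x (Fin.succ k))
      rw [hcard] at this
      exact_mod_cast this
    rw [hNcast] at hss
    have key := key_ineq (n-1) ε c s p q hε hcs (by rw [hNcast]; exact hss)
    rw [hNcast] at key
    rw [h1, normx x]
    rw [hlam, div_mul_eq_mul_div, le_div_iff₀ hd]
    calc (((n:ℝ)-1) * c^2 + 2*ε*c*s + ε^2*q) * (1+ε^2)
        ≤ (((n:ℝ)-1)*ε^2 + ε^2*(1+ε^2)) * (p+q) := key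
      _ = ε^2 * ((n:ℝ) + ε^2) * (p + q) := by ring
  -- lower bound witness
  have hab : a^2 + b^2 = ε^2/(1+ε^2) := by
    rw [ha, hb]; field_simp; ring
  set x0 : EuclideanSpace ℝ (Fin (n+1)) := (WithLp.equiv 2 (Fin (n+1) → ℝ)).symm
    (fun j => if j = 0 then ((n:ℝ)-1)*a else if j = i.succ then -(((n:ℝ)-1)*b) else ε) with hx0
  have hx0app : ∀ j : Fin (n+1), x0 j
      = if j = 0 then ((n:ℝ)-1)*a else if j = i.succ then -(((n:ℝ)-1)*b) else ε := fun j => rfl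
  have hx00 : x0 0 = ((n:ℝ)-1)*a := by rw [hx0app]; simp
  have hx0i : x0 i.succ = -(((n:ℝ)-1)*b) := by
    rw [hx0app, if_neg (Fin.succ_ne_zero i), if_pos rfl]
  have hx0k : ∀ k : Fin n, k ≠ i → x0 k.succ = ε := by
    intro k hk
    rw [hx0app, if_neg (Fin.succ_ne_zero k), if_neg (by simp [Fin.succ_inj, hk])]
  have hTx0 : ∀ k, (T x0) k = if k = i then 0 else lam := by
    intro k
    rw [hTapp x0 k]
    by_cases hk : k = i
    · simp [hk]
    · rw [if_neg hk, if_neg hk, hx00, hx0i, hx0k k hk]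
      have : a * (((n:ℝ)-1)*a) - b * (-(((n:ℝ)-1)*b)) + ε * ε
          = ((n:ℝ)-1) * (a^2+b^2) + ε^2 := by ring
      rw [this, hab, hlam]
      field_simp
      ring
  have hnormTx0 : ‖T x0‖^2 = ((n:ℝ)-1) * lam^2 := by
    rw [enorm_sq, ← Finset.add_sum_erase _ _ (Finset.mem_univ i), hTx0 i, if_pos rfl,
      Finset.sum_congr rfl (fun k hk => by rw [hTx0 k, if_neg (Finset.ne_of_mem_erase hk)]),
      Finset.sum_const, hcard, nsmul_eq_mul, hNcast]
    ring
  have hnormx0 : ‖x0‖^2 = ((n:ℝ)-1) * lam := by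
    rw [normx x0, hx00, hx0i,
      Finset.sum_congr rfl (fun k hk => by rw [hx0k k (Finset.ne_of_mem_erase hk)]),
      Finset.sum_const, hcard, nsmul_eq_mul, hNcast]
    have : ((((n:ℝ)-1)*a)^2 + (-(((n:ℝ)-1)*b))^2) = ((n:ℝ)-1)^2 * (a^2+b^2) := by ring
    rw [this, hab, hlam]
    field_simp
    ring
  have hn1' : (0:ℝ) < (n:ℝ) - 1 := by
    have : (2:ℝ) ≤ (n:ℝ) := by exact_mod_cast hn
    linarith
  -- conclude
  have hub : ‖T‖^2 ≤ lam := by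
    have hbd : ‖T‖ ≤ Real.sqrt lam := by
      apply ContinuousLinearMap.opNorm_le_bound _ (Real.sqrt_nonneg lam)
      intro x
      have hx := upper x
      have h1 : ‖T x‖ = Real.sqrt (‖T x‖^2) := (Real.sqrt_sq (norm_nonneg _)).symm
      rw [h1]
      calc Real.sqrt (‖T x‖^2) ≤ Real.sqrt (lam * ‖x‖^2) := Real.sqrt_le_sqrt hx
        _ = Real.sqrt lam * ‖x‖ := by
            rw [Real.sqrt_mul hlampos.le, Real.sqrt_sq (norm_nonneg _)]
    calc ‖T‖^2 ≤ (Real.sqrt lam)^2 := by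
          apply pow_le_pow_left₀ (norm_nonneg _) hbd
      _ = lam := Real.sq_sqrt hlampos.le
  have hlb : lam ≤ ‖T‖^2 := by
    have h := T.le_opNorm x0
    have h2 : ‖T x0‖^2 ≤ ‖T‖^2 * ‖x0‖^2 := by
      have := mul_le_mul h h (norm_nonneg _) (mul_nonneg (norm_nonneg _) (norm_nonneg _))
      calc ‖T x0‖^2 = ‖T x0‖ * ‖T x0‖ := by ring
        _ ≤ (‖T‖ * ‖x0‖) * (‖T‖ * ‖x0‖) := this
        _ = ‖T‖^2 * ‖x0‖^2 := by ring
    rw [hnormTx0, hnormx0] at h2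
    have hpos : 0 < ((n:ℝ)-1) * lam := mul_pos hn1' hlampos
    rw [← mul_le_mul_iff_left₀ hpos]
    calc lam * (((n:ℝ)-1)*lam) = ((n:ℝ)-1)*lam^2 := by ring
      _ ≤ ‖T‖^2 * (((n:ℝ)-1) * lam) := h2
  have : ‖T‖^2 = lam := le_antisymm hub hlb
  rw [hlam] at this
  exact this
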